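/- Let (X_t)_{t ∈ ℕ} be a martingale on a filtered probability space with 0 ≤ X_t ≤ 1 almost surely and X_0 = x almost surely for a constant x ∈ (0,1). Let s ∈ (0, x) and τ = inf{ t : X_t < s }. Assume that almost surely on {τ = ∞} the sequence X_t converges to 1, and let G be a measurable event with ℙ(G) = x such that, up to a null set, {τ = ∞} ⊆ G. Then the conditional probability satisfies ℙ(τ = ∞ ∣ G) ≥ (x − s)/(x·(1 − s)). -/

import Mathlib

open MeasureTheory ProbabilityTheory

/-- If `X` is a `[0,1]`-valued martingale started at `x`, `{τ = ∞}` is the event that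
`X` never goes below `s`, on this event `X_t → 1` a.s., and `G` is an event with
`ℙ(G) = x` containing `{τ = ∞}` up to a null set, then
`ℙ(τ = ∞ ∣ G) ≥ (x − s)/(x·(1 − s))`. -/
theorem conditional_prob_selling_forever
    {Ω : Type*} {m0 : MeasurableSpace Ω} (μ : Measure Ω) [IsProbabilityMeasure μ]
    (ℱ : Filtration ℕ m0) (X : ℕ → Ω → ℝ)
    (hmart : Martingale X ℱ μ)
    (hbdd : ∀ t, ∀ᵐ ω ∂μ, X t ω ∈ Set.Icc (0 : ℝ) 1)
    (x s : ℝ) (hx : x ∈ Set.Ioo (0 : ℝ) 1) (hs0 : 0 < s) (hsx : s < x)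
    (hX0 : ∀ᵐ ω ∂μ, X 0 ω = x)
    (hconv : ∀ᵐ ω ∂μ, (∀ t, s ≤ X t ω) →
      Filter.Tendsto (fun t => X t ω) Filter.atTop (nhds 1))
    (G : Set Ω) (hGmeas : MeasurableSet G) (hGx : μ G = ENNReal.ofReal x)
    (hsub : μ ({ω | ∀ t, s ≤ X t ω} \ G) = 0) :
    (x - s) / (x * (1 - s)) ≤ (μ[|G] {ω | ∀ t, s ≤ X t ω}).toReal := by
  classical
  obtain ⟨hx0, hx1⟩ := hx
  set A : Set Ω := {ω | ∀ t, s ≤ X t ω} with hA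
  have hXmeas : ∀ t, Measurable (X t) := fun t =>
    ((hmart.stronglyAdapted t).measurable).mono (ℱ.le t) le_rfl
  have hAmeas : MeasurableSet A := by
    have : A = ⋂ t, X t ⁻¹' Set.Ici s := by
      ext ω; simp [hA, Set.mem_iInter]
    rw [this]
    exact MeasurableSet.iInter fun t => (hXmeas t) measurableSet_Ici
  set B : ℕ → Set Ω := fun t => {ω | ∃ k ≤ t, X k ω < s} with hB
  have hBmeas : ∀ t, MeasurableSet (B t) := by
    intro t
    have : B t = ⋃ k, ⋃ _ : k ≤ t, X k ⁻¹' Set.Iio s := by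
      ext ω; simp [hB]
    rw [this]
    exact MeasurableSet.iUnion fun k => MeasurableSet.iUnion fun _ =>
      (hXmeas k) measurableSet_Iio
  have hBmono : Monotone B := by
    intro a b hab ω ⟨k, hk, hks⟩
    exact ⟨k, hk.trans hab, hks⟩
  -- key inequality for each t
  have key : ∀ t : ℕ, x ≤ s * (μ (B t)).toReal + (μ (B t)ᶜ).toReal := by
    intro t
    set τ : Ω → WithTop ℕ := fun ω => (hittingBtwn X (Set.Iio s) 0 t ω : ℕ) with hτdef
    have hτ : IsStoppingTime ℱ τ :=
      hmart.stronglyAdapted.adapted.isStoppingTime_hittingBtwn measurableSet_Iio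
    have hτt : ∀ ω, τ ω ≤ t := fun ω => WithTop.coe_le_coe.2 (hittingBtwn_le ω)
    -- optional stopping
    have h1 : μ[stoppedValue X (fun _ => 0)] ≤ μ[stoppedValue X τ] :=
      hmart.submartingale.expected_stoppedValue_mono (isStoppingTime_const ℱ 0) hτ
        (fun ω => bot_le) hτt
    have h0 : μ[stoppedValue X (fun _ => (0 : ℕ))] = x := by
      have : stoppedValue X (fun _ => (0 : ℕ)) = X 0 := stoppedValue_const X 0
      rw [this, integral_congr_ae hX0]
      simp
    set g : Ω → ℝ := fun ω =>
      (B t).indicator (fun _ => s) ω + (B t)ᶜ.indicator (fun _ => (1 : ℝ)) ω with hg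
    have hgint : Integrable g μ :=
      ((integrable_const s).indicator (hBmeas t)).add
        ((integrable_const (1 : ℝ)).indicator (hBmeas t).compl)
    have hb' : ∀ᵐ ω ∂μ, ∀ k, X k ω ∈ Set.Icc (0 : ℝ) 1 := ae_all_iff.2 hbdd
    have h2 : μ[stoppedValue X τ] ≤ μ[g] := by
      refine integral_mono_ae
        (integrable_stoppedValue ℕ hτ hmart.integrable hτt) hgint ?_
      filter_upwards [hb'] with ω hω
      by_cases hωB : ω ∈ B t
      · obtain ⟨k, hk, hks⟩ := id hωB
        have hmem : stoppedValue X τ ω ∈ Set.Iio s :=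
          stoppedValue_hittingBtwn_mem ⟨k, ⟨Nat.zero_le k, hk⟩, hks⟩
        have : g ω = s := by
          simp [hg, Set.indicator_of_mem hωB, Set.indicator_of_notMem (Set.notMem_compl_iff.2 hωB)]
        rw [this]
        exact le_of_lt hmem
      · have : g ω = 1 := by
          simp [hg, Set.indicator_of_notMem hωB, Set.indicator_of_mem (Set.mem_compl hωB)]
        rw [this]
        exact (hω (τ ω).untopA).2
    have h3 : μ[g] = s * (μ (B t)).toReal + (μ (B t)ᶜ).toReal := by
      rw [hg, integral_add ((integrable_const s).indicator (hBmeas t))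
        ((integrable_const (1 : ℝ)).indicator (hBmeas t).compl),
        integral_indicator_const _ (hBmeas t), integral_indicator_const _ (hBmeas t).compl]
      simp [mul_comm, measureReal_def]
    calc x = μ[stoppedValue X (fun _ => (0 : ℕ))] := h0.symm
      _ ≤ μ[stoppedValue X τ] := h1
      _ ≤ μ[g] := h2
      _ = _ := h3
  -- take the limit t → ∞
  have hUnion : (⋃ t, B t) = Aᶜ := by
    ext ω
    simp only [Set.mem_iUnion, Set.mem_compl_iff, hB, hA, Set.mem_setOf_eq]
    constructor
    · rintro ⟨t, k, _, hks⟩ h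
      exact absurd (h k) (not_le.2 hks)
    · intro h
      push_neg at h
      obtain ⟨k, hk⟩ := h
      exact ⟨k, k, le_rfl, hk⟩
  have hInter : (⋂ t, (B t)ᶜ) = A := by
    rw [← Set.compl_iUnion, hUnion, compl_compl]
  have hlim1 : Filter.Tendsto (fun t => (μ (B t)).toReal) Filter.atTop
      (nhds (μ Aᶜ).toReal) := by
    have := tendsto_measure_iUnion_atTop (μ := μ) hBmono
    rw [hUnion] at this
    exact (ENNReal.tendsto_toReal (measure_ne_top μ _)).comp this
  have hlim2 : Filter.Tendsto (fun t => (μ (B t)ᶜ).toReal) Filter.atTop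
      (nhds (μ A).toReal) := by
    have := tendsto_measure_iInter_atTop (μ := μ)
      (fun t => (hBmeas t).compl.nullMeasurableSet)
      (fun a b hab => Set.compl_subset_compl.2 (hBmono hab)) ⟨0, measure_ne_top μ _⟩
    rw [hInter] at this
    exact (ENNReal.tendsto_toReal (measure_ne_top μ _)).comp this
  have hxle : x ≤ s * (μ Aᶜ).toReal + (μ A).toReal :=
    ge_of_tendsto' (((hlim1.const_mul s).add hlim2)) key
  set p : ℝ := (μ A).toReal with hp
  have hq : (μ Aᶜ).toReal = 1 - p := by
    have h := measure_add_measure_compl (μ := μ) hAmeas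
    have := congrArg ENNReal.toReal h
    rw [ENNReal.toReal_add (measure_ne_top μ _) (measure_ne_top μ _)] at this
    simp only [measure_univ, ENNReal.toReal_one] at this
    linarith [this]
  rw [hq] at hxle
  have hs1 : 0 < 1 - s := by linarith
  have hpge : (x - s) / (1 - s) ≤ p := by
    rw [div_le_iff₀ hs1]
    nlinarith
  -- relate to the conditional probability
  have hcond : μ[|G] A = (μ G)⁻¹ * μ (G ∩ A) := cond_apply hGmeas μ A
  have hGA : μ A ≤ μ (G ∩ A) := by
    have hsubset : A ⊆ (G ∩ A) ∪ (A \ G) := by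
      intro ω hω
      by_cases hωG : ω ∈ G
      · exact Or.inl ⟨hωG, hω⟩
      · exact Or.inr ⟨hω, hωG⟩
    calc μ A ≤ μ ((G ∩ A) ∪ (A \ G)) := measure_mono hsubset
      _ ≤ μ (G ∩ A) + μ (A \ G) := measure_union_le _ _
      _ = μ (G ∩ A) := by rw [hsub, add_zero]
  have hcondval : (μ[|G] A).toReal = x⁻¹ * (μ (G ∩ A)).toReal := by
    rw [hcond, ENNReal.toReal_mul, ENNReal.toReal_inv, hGx,
      ENNReal.toReal_ofReal hx0.le]
  have hGAtoReal : p ≤ (μ (G ∩ A)).toReal := ENNReal.toReal_le_toReal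
    (measure_ne_top μ _) (measure_ne_top μ _) |>.2 hGA
  have heq : (x - s) / (x * (1 - s)) = x⁻¹ * ((x - s) / (1 - s)) := by
    field_simp
  rw [hcondval, heq]
  have hx0' : (0 : ℝ) ≤ x⁻¹ := inv_nonneg.2 hx0.le
  exact mul_le_mul_of_nonneg_left (hpge.trans hGAtoReal) hx0'
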